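/- Let n ≥ 3 be an integer and let s, t > 0 be real numbers. Then s^{(n+2)/(n−2)} + t^{(n+2)/(n−2)} < (s + t) · (s^{2n/(n−2)} + t^{2n/(n−2)})^{2/n}. -/
import Mathlib


/-- **The pointwise strict inequality underlying the branched-cover Aubin lemma.**
For an integer `n ≥ 3` and reals `s, t > 0`,
`s^{(n+2)/(n−2)} + t^{(n+2)/(n−2)} < (s + t)·(s^{2n/(n−2)} + t^{2n/(n−2)})^{2/n}`. -/
theorem aubin_pointwise_strict (n : ℕ) (hn : 3 ≤ n) (s t : ℝ) (hs : 0 < s) (ht : 0 < t) :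
    s ^ (((n : ℝ) + 2) / ((n : ℝ) - 2)) + t ^ (((n : ℝ) + 2) / ((n : ℝ) - 2)) <
      (s + t) * (s ^ (2 * (n : ℝ) / ((n : ℝ) - 2)) +
        t ^ (2 * (n : ℝ) / ((n : ℝ) - 2))) ^ ((2 : ℝ) / (n : ℝ)) := by
  have hn3 : (3 : ℝ) ≤ (n : ℝ) := by exact_mod_cast hn
  have hn0 : (n : ℝ) ≠ 0 := by linarith
  have h2 : (0 : ℝ) < (n : ℝ) - 2 := by linarith
  set q : ℝ := 2 * (n : ℝ) / ((n : ℝ) - 2) with hq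
  have key : ∀ x : ℝ, 0 < x →
      x ^ (((n : ℝ) + 2) / ((n : ℝ) - 2)) = x * (x ^ q) ^ ((2 : ℝ) / (n : ℝ)) := by
    intro x hx
    rw [show ((n : ℝ) + 2) / ((n : ℝ) - 2) = 1 + q * ((2 : ℝ) / (n : ℝ)) by
        rw [hq]; field_simp; ring,
      Real.rpow_add hx, Real.rpow_one, Real.rpow_mul hx.le]
  have hexp : (0 : ℝ) < (2 : ℝ) / (n : ℝ) := by positivity
  have hsq : s ^ q < s ^ q + t ^ q := by
    have := Real.rpow_pos_of_pos ht q
    linarith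
  have htq : t ^ q < s ^ q + t ^ q := by
    have := Real.rpow_pos_of_pos hs q
    linarith
  have h1 : (s ^ q) ^ ((2 : ℝ) / (n : ℝ)) < (s ^ q + t ^ q) ^ ((2 : ℝ) / (n : ℝ)) :=
    Real.rpow_lt_rpow (Real.rpow_pos_of_pos hs q).le hsq hexp
  have h1' : (t ^ q) ^ ((2 : ℝ) / (n : ℝ)) < (s ^ q + t ^ q) ^ ((2 : ℝ) / (n : ℝ)) :=
    Real.rpow_lt_rpow (Real.rpow_pos_of_pos ht q).le htq hexp
  rw [key s hs, key t ht]
  have := mul_lt_mul_of_pos_left h1 hs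
  have := mul_lt_mul_of_pos_left h1' ht
  nlinarith
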